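/- For r > 0, the function ξ ↦ √2 / √(π(r² - ξ²)) on (-r, r) (extended by 0 outside) is integrable on ℝ, and its inverse Fourier transform is the Bessel function λ ↦ J₀(rλ) (up to the normalization of the Fourier transform), so that the Fourier transform of λ ↦ J₀(rλ) is a function supported in [-r, r]. -/

import Mathlib

set_option autoImplicit false

open MeasureTheory Real

noncomputable def besselJ0 (t : ℝ) : ℝ :=
  (1 / π) * ∫ θ in (0:ℝ)..π, Real.cos (t * Real.sin θ)

lemma aux_image (r : ℝ) (hr : 0 < r) :
    (fun θ : ℝ => r * Real.sin θ) '' Set.Ioo (-(π/2)) (π/2) = Set.Ioo (-r) r := by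
  ext x
  simp only [Set.mem_image, Set.mem_Ioo]
  constructor
  · rintro ⟨θ, ⟨h1, h2⟩, rfl⟩
    have hs1 : Real.sin θ < 1 := by
      have := Real.strictMonoOn_sin
        ⟨h1.le, h2.le⟩ ⟨by linarith [Real.pi_pos], le_refl _⟩ h2
      simpa using this
    have hs2 : -1 < Real.sin θ := by
      have := Real.strictMonoOn_sin
        ⟨le_refl _, by linarith [Real.pi_pos]⟩ ⟨h1.le, h2.le⟩ h1
      simpa using this
    constructor
    · nlinarith
    · nlinarith
  · rintro ⟨h1, h2⟩
    refine ⟨Real.arcsin (x / r), ⟨?_, ?_⟩, ?_⟩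
    · rw [Real.neg_pi_div_two_lt_arcsin]
      rw [neg_lt, ← neg_div]
      exact (div_lt_one hr).2 (by linarith)
    · rw [Real.arcsin_lt_pi_div_two]
      exact (div_lt_one hr).2 h2
    · rw [Real.sin_arcsin (by rw [le_div_iff₀ hr]; linarith) (by rw [div_le_one hr]; linarith)]
      field_simp

lemma aux_inj (r : ℝ) (hr : 0 < r) :
    Set.InjOn (fun θ : ℝ => r * Real.sin θ) (Set.Ioo (-(π/2)) (π/2)) := by
  intro a ha b hb h
  have h' : Real.sin a = Real.sin b := mul_left_cancel₀ hr.ne' h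
  exact Real.injOn_sin (Set.Ioo_subset_Icc_self ha) (Set.Ioo_subset_Icc_self hb) h'

lemma aux_simp (r : ℝ) (hr : 0 < r) {θ : ℝ} (hθ : θ ∈ Set.Ioo (-(π/2)) (π/2)) (h : ℝ) :
    |r * Real.cos θ| •
      (Real.sqrt 2 / Real.sqrt (π * (r ^ 2 - (r * Real.sin θ) ^ 2)) * h) =
      (Real.sqrt 2 / Real.sqrt π) * h := by
  have hc : 0 < Real.cos θ := Real.cos_pos_of_mem_Ioo hθ
  have h1 : r ^ 2 - (r * Real.sin θ) ^ 2 = (r * Real.cos θ) ^ 2 := by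
    have := Real.sin_sq_add_cos_sq θ
    nlinarith
  rw [h1, Real.sqrt_mul Real.pi_pos.le, Real.sqrt_sq (by positivity : (0:ℝ) ≤ r * Real.cos θ)]
  rw [abs_of_pos (by positivity)]
  have hπ : Real.sqrt π > 0 := Real.sqrt_pos.2 Real.pi_pos
  rw [smul_eq_mul]
  field_simp

lemma bessel_eq (t : ℝ) :
    (∫ θ in (-(π/2))..(π/2), Real.cos (t * Real.sin θ)) = π * besselJ0 t := by
  set f : ℝ → ℝ := fun θ => Real.cos (t * Real.sin θ) with hf
  have hcont : Continuous f := by fun_prop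
  have h1 : (∫ θ in (-(π/2))..(0:ℝ), f θ) = ∫ θ in (0:ℝ)..(π/2), f θ := by
    rw [show (∫ θ in (0:ℝ)..(π/2), f θ) = ∫ θ in (0:ℝ)..(π/2), f (-θ) from
      intervalIntegral.integral_congr (fun θ _ => by simp [hf, Real.sin_neg])]
    rw [intervalIntegral.integral_comp_neg, neg_zero]
  have h2 : (∫ θ in (π/2)..π, f θ) = ∫ θ in (0:ℝ)..(π/2), f θ := by
    rw [show (∫ θ in (0:ℝ)..(π/2), f θ) = ∫ θ in (0:ℝ)..(π/2), f (π - θ) from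
      intervalIntegral.integral_congr (fun θ _ => by simp [hf, Real.sin_pi_sub])]
    rw [intervalIntegral.integral_comp_sub_left f π, sub_zero, sub_half]
  have hadd1 : (∫ θ in (-(π/2))..(0:ℝ), f θ) + (∫ θ in (0:ℝ)..(π/2), f θ) =
      ∫ θ in (-(π/2))..(π/2), f θ :=
    intervalIntegral.integral_add_adjacent_intervals
      (hcont.intervalIntegrable _ _) (hcont.intervalIntegrable _ _)
  have hadd2 : (∫ θ in (0:ℝ)..(π/2), f θ) + (∫ θ in (π/2)..π, f θ) =
      ∫ θ in (0:ℝ)..π, f θ :=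
    intervalIntegral.integral_add_adjacent_intervals
      (hcont.intervalIntegrable _ _) (hcont.intervalIntegrable _ _)
  have hkey : (∫ θ in (-(π/2))..(π/2), f θ) = ∫ θ in (0:ℝ)..π, f θ := by
    rw [← hadd1, ← hadd2, h1, h2]
  rw [hkey, besselJ0, ← hf, ← mul_assoc, mul_one_div, div_self Real.pi_ne_zero, one_mul]

theorem stmt13 (r : ℝ) (hr : 0 < r) :
    Integrable ((Set.Ioo (-r) r).indicator
      (fun ξ : ℝ => Real.sqrt 2 / Real.sqrt (π * (r ^ 2 - ξ ^ 2)))) ∧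
    ∃ c : ℝ, c ≠ 0 ∧ ∀ lam : ℝ,
      (∫ ξ in Set.Ioo (-r) r,
        (Real.sqrt 2 / Real.sqrt (π * (r ^ 2 - ξ ^ 2))) * Real.cos (ξ * lam)) =
      c * besselJ0 (r * lam) := by
  have hms : MeasurableSet (Set.Ioo (-(π/2)) (π/2) : Set ℝ) := measurableSet_Ioo
  have hd : ∀ θ ∈ Set.Ioo (-(π/2)) (π/2),
      HasDerivWithinAt (fun θ : ℝ => r * Real.sin θ) (r * Real.cos θ)
        (Set.Ioo (-(π/2)) (π/2)) θ :=
    fun θ _ => ((Real.hasDerivAt_sin θ).const_mul r).hasDerivWithinAt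
  constructor
  · rw [integrable_indicator_iff measurableSet_Ioo, ← aux_image r hr,
      integrableOn_image_iff_integrableOn_abs_deriv_smul hms hd (aux_inj r hr)]
    have heq : Set.EqOn (fun θ => |r * Real.cos θ| •
        (Real.sqrt 2 / Real.sqrt (π * (r ^ 2 - (r * Real.sin θ) ^ 2))))
        (fun _ => Real.sqrt 2 / Real.sqrt π) (Set.Ioo (-(π/2)) (π/2)) := by
      intro θ hθ
      simpa using aux_simp r hr hθ 1
    have hconst : IntegrableOn (fun _ : ℝ => Real.sqrt 2 / Real.sqrt π)
        (Set.Ioo (-(π/2)) (π/2)) :=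
      integrableOn_const measure_Ioo_lt_top.ne
    exact hconst.congr_fun heq.symm hms
  · refine ⟨Real.sqrt 2 * Real.sqrt π, by positivity, fun lam => ?_⟩
    rw [← aux_image r hr,
      integral_image_eq_integral_abs_deriv_smul hms hd (aux_inj r hr)]
    have heq : Set.EqOn (fun θ => |r * Real.cos θ| •
        (Real.sqrt 2 / Real.sqrt (π * (r ^ 2 - (r * Real.sin θ) ^ 2)) *
          Real.cos ((r * Real.sin θ) * lam)))
        (fun θ => (Real.sqrt 2 / Real.sqrt π) * Real.cos ((r * lam) * Real.sin θ))
        (Set.Ioo (-(π/2)) (π/2)) := by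
      intro θ hθ
      simp only
      rw [aux_simp r hr hθ _]
      ring_nf
    rw [setIntegral_congr_fun hms heq, integral_const_mul]
    have hπ2 : -(π/2) ≤ (π/2 : ℝ) := by linarith [Real.pi_pos]
    have hIoo : (∫ θ in Set.Ioo (-(π/2)) (π/2), Real.cos ((r * lam) * Real.sin θ)) =
        ∫ θ in (-(π/2))..(π/2), Real.cos ((r * lam) * Real.sin θ) := by
      rw [intervalIntegral.integral_of_le hπ2, MeasureTheory.integral_Ioc_eq_integral_Ioo]
    rw [hIoo, bessel_eq]
    have hs : Real.sqrt π * Real.sqrt π = π := Real.mul_self_sqrt Real.pi_pos.le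
    have hπ : Real.sqrt π ≠ 0 := (Real.sqrt_pos.2 Real.pi_pos).ne'
    field_simp
    linear_combination -(besselJ0 (r * lam) * hs)
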